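/- Let D ≥ 1, let ρ₀ be a positive semidefinite matrix on ℂ^D with spectral decomposition ρ₀ = Σ_x λ_x|x⟩⟨x| (all λ_x > 0), let P = Σ_x |x⟩⟨x| be the projector onto its support, fix a nonzero scalar c, set L = Σ_x √λ_x (|x⟩⟨x|)ᵀ + c(I−P)ᵀ (an invertible matrix), and let |Ψ_m⟩ = N(I⊗L)|Ψ⟩ with N = √(D/Tr(L†L)). Then for every unit vector |χ⟩ ∈ ℂ^D with P|χ⟩ = |χ⟩, the matrix P · Tr_B(|Ψ_m⟩⟨Ψ_m| (I ⊗ (L^{-1})†(|χ⟩⟨χ|)ᵀ L^{-1})) · P has strictly positive trace and, after dividing by its trace, equals |χ⟩⟨χ|. (This is the statement, in Lemma 1 of the paper, that Alice's post-measurement state in the remote identical state preparation protocol is exactly the pure state measured by Bob.) -/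

import Mathlib

open Matrix MeasureTheory
open scoped Kronecker ComplexOrder

noncomputable section

/-- The positive semidefinite square root of a matrix (junk value `0` if not PSD). -/
def matSqrt {ι : Type*} [Fintype ι] [DecidableEq ι] (A : Matrix ι ι ℂ) : Matrix ι ι ℂ :=
  open Classical in if h : A.PosSemidef then
    (h.1.eigenvectorUnitary : Matrix ι ι ℂ) *
      diagonal ((↑) ∘ (fun r : ℝ => Real.sqrt r) ∘ h.1.eigenvalues) *
      (star h.1.eigenvectorUnitary : Matrix ι ι ℂ) else 0

/-- The matrix absolute value `|X| = √(XᴴX)`. -/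
def matAbs {ι : Type*} [Fintype ι] [DecidableEq ι] (X : Matrix ι ι ℂ) : Matrix ι ι ℂ :=
  matSqrt (Xᴴ * X)

/-- Uhlmann fidelity `F(ρ,σ) = (Tr|√ρ√σ|)²`. -/
def fid {ι : Type*} [Fintype ι] [DecidableEq ι] (ρ σ : Matrix ι ι ℂ) : ℝ :=
  ((matAbs (matSqrt ρ * matSqrt σ)).trace).re ^ 2

/-- A density matrix: positive semidefinite with unit trace. -/
def IsDensity {ι : Type*} [Fintype ι] [DecidableEq ι] (ρ : Matrix ι ι ℂ) : Prop :=
  ρ.PosSemidef ∧ ρ.trace = 1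

/-- The rank-one projector `|ψ⟩⟨ψ|`. -/
def ketbra {ι : Type*} (ψ : ι → ℂ) : Matrix ι ι ℂ := Matrix.vecMulVec ψ (star ψ)

/-- The `l`-fold tensor power of a matrix on `ℂ^d`, acting on `(ℂ^d)^{⊗l}`. -/
def tpow {d : ℕ} (M : Matrix (Fin d) (Fin d) ℂ) (l : ℕ) :
    Matrix (Fin l → Fin d) (Fin l → Fin d) ℂ :=
  Matrix.of fun f g => ∏ i, M (f i) (g i)

/-- Loewner order: `A ⪯ B` iff `B - A` is positive semidefinite. -/
def loewnerLE {ι : Type*} [Fintype ι] (A B : Matrix ι ι ℂ) : Prop := (B - A).PosSemidef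

/-- Projector onto the symmetric subspace of `(ℂ^d)^{⊗l}`:
`(1/l!) Σ_{π ∈ S_l} U_π` where `U_π` permutes the tensor factors. -/
def symProj (d l : ℕ) : Matrix (Fin l → Fin d) (Fin l → Fin d) ℂ :=
  (l.factorial : ℂ)⁻¹ •
    ∑ π : Equiv.Perm (Fin l), Matrix.of fun f g => if f = (fun i => g (π i)) then (1 : ℂ) else 0


/-- Partial trace over the second tensor factor. -/
def ptraceB {D : ℕ} (M : Matrix (Fin D × Fin D) (Fin D × Fin D) ℂ) :
    Matrix (Fin D) (Fin D) ℂ :=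
  Matrix.of fun i j => ∑ k, M (i, k) (j, k)

/-- The maximally entangled vector `(1/√D) Σᵢ |i⟩⊗|i⟩` on `ℂ^D ⊗ ℂ^D`. -/
def maxEnt (D : ℕ) : Fin D × Fin D → ℂ :=
  fun q => if q.1 = q.2 then ((Real.sqrt D : ℝ) : ℂ)⁻¹ else 0


lemma vecMulVec_mul_vecMulVec' {ι : Type*} [Fintype ι] (u v w z : ι → ℂ) :
    Matrix.vecMulVec u v * Matrix.vecMulVec w z = (v ⬝ᵥ w) • Matrix.vecMulVec u z := by
  ext i j
  rw [Matrix.mul_apply]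
  simp only [Matrix.vecMulVec_apply, Matrix.smul_apply, dotProduct, Finset.sum_mul, smul_eq_mul]
  apply Finset.sum_congr rfl; intros; ring

lemma inv_pair {D : ℕ} {κ : Type*} [Fintype κ] [DecidableEq κ]
    (x : κ → (Fin D → ℂ))
    (hkk : ∀ a b, ketbra (x a) * ketbra (x b) = if a = b then ketbra (x a) else 0)
    (μ ν : κ → ℂ) (hμν : ∀ a, μ a * ν a = 1)
    (c d : ℂ) (hcd : c * d = 1)
    (P : Matrix (Fin D) (Fin D) ℂ) (hP : P = ∑ a, ketbra (x a)) :
    ((∑ a, μ a • ketbra (x a)) + c • (1 - P)) *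
      ((∑ a, ν a • ketbra (x a)) + d • (1 - P)) = 1 := by
  have hPk : ∀ a, P * ketbra (x a) = ketbra (x a) := by
    intro a
    rw [hP, Finset.sum_mul]
    simp [hkk]
  have hkP : ∀ a, ketbra (x a) * P = ketbra (x a) := by
    intro a
    rw [hP, Finset.mul_sum]
    simp [hkk]
  have hPP : P * P = P := by
    rw [hP, Finset.sum_mul]
    exact Finset.sum_congr rfl fun a _ => by rw [← hP, hkP]
  have hSS : (∑ a, μ a • ketbra (x a)) * (∑ a, ν a • ketbra (x a)) = P := by
    rw [Finset.sum_mul, hP]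
    apply Finset.sum_congr rfl; intro a _
    rw [Finset.mul_sum]
    have : ∀ b ∈ Finset.univ, (μ a • ketbra (x a)) * (ν b • ketbra (x b))
        = if b = a then ketbra (x a) else 0 := by
      intro b _
      rw [smul_mul_assoc, mul_smul_comm, hkk, smul_smul]
      by_cases h : a = b
      · subst h; simp [hμν a]
      · simp [h, Ne.symm h]
    rw [Finset.sum_congr rfl this, Finset.sum_ite_eq' Finset.univ a]
    simp
  have hS1P : (∑ a, μ a • ketbra (x a)) * (1 - P) = 0 := by
    rw [Matrix.mul_sub, Matrix.mul_one, Finset.sum_mul, sub_eq_zero]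
    exact (Finset.sum_congr rfl fun a _ => by rw [smul_mul_assoc, hkP]).symm
  have h1PS : (1 - P) * (∑ a, ν a • ketbra (x a)) = 0 := by
    rw [Matrix.sub_mul, Matrix.one_mul, Finset.mul_sum, sub_eq_zero]
    exact (Finset.sum_congr rfl fun a _ => by rw [mul_smul_comm, hPk]).symm
  have h1P1P : (1 - P) * (1 - P) = 1 - P := by
    rw [Matrix.sub_mul, Matrix.one_mul, Matrix.mul_sub, Matrix.mul_one, hPP]
    abel
  rw [Matrix.add_mul, Matrix.mul_add, Matrix.mul_add, hSS, Matrix.mul_smul, hS1P,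
    Matrix.smul_mul, h1PS, Matrix.smul_mul, Matrix.mul_smul, h1P1P, smul_smul, hcd]
  simp

lemma ptrace_ketbra_kron {D : ℕ} (L M : Matrix (Fin D) (Fin D) ℂ) (α : ℝ)
    (Ψ : Fin D × Fin D → ℂ) (hΨ : ∀ q, Ψ q = (α : ℂ) * L q.2 q.1) :
    ptraceB (ketbra Ψ * ((1 : Matrix (Fin D) (Fin D) ℂ) ⊗ₖ M)) = ((α:ℂ)^2) • (Lᴴ * M * L)ᵀ := by
  ext i j
  have key : ∀ k, (ketbra Ψ * ((1 : Matrix (Fin D) (Fin D) ℂ) ⊗ₖ M)) (i,k) (j,k)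
      = ∑ q, (α:ℂ)^2 * L k i * (starRingEnd ℂ) (L q j) * M q k := by
    intro k
    rw [Matrix.mul_apply, Fintype.sum_prod_type, Finset.sum_comm]
    apply Finset.sum_congr rfl; intro q _
    simp only [ketbra, Matrix.vecMulVec_apply, Pi.star_apply, Matrix.kroneckerMap_apply,
      Matrix.one_apply, hΨ, RCLike.star_def, _root_.map_mul, Complex.conj_ofReal,
      ite_mul, one_mul, zero_mul, mul_ite, mul_zero]
    rw [Finset.sum_ite_eq' Finset.univ j]
    simp only [Finset.mem_univ, if_true]
    ring
  show (∑ k, (ketbra Ψ * ((1 : Matrix (Fin D) (Fin D) ℂ) ⊗ₖ M)) (i,k) (j,k)) = _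
  rw [Finset.sum_congr rfl fun k _ => key k]
  simp only [Matrix.smul_apply, Matrix.transpose_apply,
    Matrix.mul_apply, Matrix.conjTranspose_apply, smul_eq_mul, RCLike.star_def,
    Finset.mul_sum, Finset.sum_mul]
  apply Finset.sum_congr rfl; intro k _
  apply Finset.sum_congr rfl; intro q _
  ring

/-- in the remote identical state preparation protocol, Alice's
post-measurement state is exactly the pure state measured by Bob. -/
theorem remote_preparation_post_measurement_state
    (D : ℕ) (hD : 1 ≤ D)
    -- spectral decomposition ρ₀ = Σ_x λ_x |x⟩⟨x| with all λ_x > 0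
    (κ : Type*) [Fintype κ] [DecidableEq κ]
    (x : κ → (Fin D → ℂ)) (hx : ∀ a b, star (x a) ⬝ᵥ x b = (if a = b then (1 : ℂ) else 0))
    (lam : κ → ℝ) (hlam : ∀ a, 0 < lam a)
    (ρ₀ : Matrix (Fin D) (Fin D) ℂ) (hρ₀ : ρ₀ = ∑ a, (lam a : ℂ) • ketbra (x a))
    -- P is the projector onto the support of ρ₀
    (P : Matrix (Fin D) (Fin D) ℂ) (hP : P = ∑ a, ketbra (x a))
    -- L = Σ_x √λ_x (|x⟩⟨x|)ᵀ + c(I−P)ᵀ with c ≠ 0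
    (c : ℂ) (hc : c ≠ 0)
    (L : Matrix (Fin D) (Fin D) ℂ)
    (hL : L = (∑ a, ((Real.sqrt (lam a) : ℝ) : ℂ) • (ketbra (x a))ᵀ) + c • (1 - P)ᵀ)
    -- |Ψ_m⟩ = N (I ⊗ L)|Ψ⟩ with N = √(D / Tr(L†L))
    (N : ℝ) (hN : N = Real.sqrt (D / ((Lᴴ * L).trace).re))
    (Ψm : Fin D × Fin D → ℂ)
    (hΨm : Ψm = (N : ℂ) • ((1 : Matrix (Fin D) (Fin D) ℂ) ⊗ₖ L).mulVec (maxEnt D))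
    -- χ is a unit vector in the support of ρ₀
    (χ : Fin D → ℂ) (hχ : star χ ⬝ᵥ χ = 1) (hPχ : P.mulVec χ = χ)
    -- Alice's (unnormalized) post-measurement matrix
    (A : Matrix (Fin D) (Fin D) ℂ)
    (hA : A = P * ptraceB (ketbra Ψm *
      ((1 : Matrix (Fin D) (Fin D) ℂ) ⊗ₖ ((L⁻¹)ᴴ * (ketbra χ)ᵀ * L⁻¹))) * P) :
    0 < A.trace.re ∧ (A.trace)⁻¹ • A = ketbra χ := by
  have hDpos : 0 < D := hD
  have hkk : ∀ a b, ketbra (x a) * ketbra (x b) = if a = b then ketbra (x a) else 0 := by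
    intro a b
    rw [ketbra, ketbra, vecMulVec_mul_vecMulVec', hx a b]
    by_cases h : a = b <;> simp [h, ketbra]
  have hsq : ∀ a, ((Real.sqrt (lam a) : ℝ) : ℂ) ≠ 0 := by
    intro a
    simp only [ne_eq, Complex.ofReal_eq_zero]
    exact ne_of_gt (Real.sqrt_pos.mpr (hlam a))
  -- explicit inverse of L
  set B : Matrix (Fin D) (Fin D) ℂ :=
    (∑ a, ((Real.sqrt (lam a) : ℝ) : ℂ) • ketbra (x a)) + c • (1 - P) with hB
  set B' : Matrix (Fin D) (Fin D) ℂ :=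
    (∑ a, (((Real.sqrt (lam a) : ℝ) : ℂ))⁻¹ • ketbra (x a)) + c⁻¹ • (1 - P) with hB'
  have hBB' : B * B' = 1 :=
    inv_pair x hkk _ _ (fun a => mul_inv_cancel₀ (hsq a)) c c⁻¹ (mul_inv_cancel₀ hc) P hP
  have hB'B : B' * B = 1 :=
    inv_pair x hkk _ _ (fun a => inv_mul_cancel₀ (hsq a)) c⁻¹ c (inv_mul_cancel₀ hc) P hP
  have hLB : L = Bᵀ := by
    rw [hL, hB, Matrix.transpose_add, Matrix.transpose_smul, Matrix.transpose_sum]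
    simp only [Matrix.transpose_smul]
  have hLR : L * B'ᵀ = 1 := by
    rw [hLB, ← Matrix.transpose_mul, hB'B, Matrix.transpose_one]
  have hRL : B'ᵀ * L = 1 := by
    rw [hLB, ← Matrix.transpose_mul, hBB', Matrix.transpose_one]
  have hLinv : L⁻¹ = B'ᵀ := Matrix.inv_eq_right_inv hLR
  have hLiL : L⁻¹ * L = 1 := by rw [hLinv]; exact hRL
  have hLLi : L * L⁻¹ = 1 := by rw [hLinv]; exact hLR
  -- the sandwich identity
  have hsand : Lᴴ * ((L⁻¹)ᴴ * (ketbra χ)ᵀ * L⁻¹) * L = (ketbra χ)ᵀ := by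
    have h1 : Lᴴ * (L⁻¹)ᴴ = 1 := by
      rw [← Matrix.conjTranspose_mul, hLiL, Matrix.conjTranspose_one]
    calc Lᴴ * ((L⁻¹)ᴴ * (ketbra χ)ᵀ * L⁻¹) * L
        = (Lᴴ * (L⁻¹)ᴴ) * (ketbra χ)ᵀ * (L⁻¹ * L) := by
          simp only [Matrix.mul_assoc]
      _ = (ketbra χ)ᵀ := by rw [h1, hLiL, Matrix.one_mul, Matrix.mul_one]
  -- positivity of t = Tr(LᴴL).re
  set t : ℝ := ((Lᴴ * L).trace).re with ht
  have htsum : t = ∑ j, ∑ i, Complex.normSq (L i j) := by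
    rw [ht, Matrix.trace]
    simp only [Matrix.diag, Matrix.mul_apply, Matrix.conjTranspose_apply, RCLike.star_def]
    rw [Complex.re_sum]
    apply Finset.sum_congr rfl; intro j _
    rw [Complex.re_sum]
    apply Finset.sum_congr rfl; intro i _
    rw [mul_comm, Complex.mul_conj, Complex.ofReal_re]
  have hLne : ∃ i j, L i j ≠ 0 := by
    by_contra h
    push_neg at h
    have hL0 : L = 0 := by ext i j; exact h i j
    have h0 := hLLi
    rw [hL0, Matrix.zero_mul] at h0
    have := congrFun (congrFun h0 ⟨0, hDpos⟩) ⟨0, hDpos⟩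
    simp [Matrix.one_apply] at this
  have ht0 : 0 < t := by
    obtain ⟨i, j, hij⟩ := hLne
    rw [htsum]
    apply Finset.sum_pos'
    · intro j' _
      exact Finset.sum_nonneg fun i' _ => Complex.normSq_nonneg _
    · refine ⟨j, Finset.mem_univ j, ?_⟩
      apply Finset.sum_pos'
      · intro i' _; exact Complex.normSq_nonneg _
      · exact ⟨i, Finset.mem_univ i, Complex.normSq_pos.mpr hij⟩
  have hDR : (0:ℝ) < (D:ℝ) := by exact_mod_cast hDpos
  -- Ψm entries
  set α : ℝ := N * (Real.sqrt D)⁻¹ with hα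
  have hΨ : ∀ q : Fin D × Fin D, Ψm q = (α : ℂ) * L q.2 q.1 := by
    intro q
    rw [hΨm]
    simp only [Pi.smul_apply, smul_eq_mul, Matrix.mulVec, dotProduct, Fintype.sum_prod_type,
      Matrix.kroneckerMap_apply, Matrix.one_apply, maxEnt, ite_mul, one_mul, zero_mul,
      mul_ite, mul_zero]
    simp only [Finset.sum_ite_eq, Finset.mem_univ, if_true]
    rw [hα]
    push_cast
    ring
  have hN2 : N ^ 2 = (D:ℝ) / t := by
    rw [hN]
    exact Real.sq_sqrt (le_of_lt (div_pos hDR ht0))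
  have hα2 : α ^ 2 = t⁻¹ := by
    rw [hα, mul_pow, hN2, sq]
    rw [← Real.sqrt_mul_self (le_of_lt hDR)]
    field_simp
    ring
    rw [Real.sq_sqrt (Real.sqrt_nonneg _)]
  -- compute A
  have hptA := ptrace_ketbra_kron L ((L⁻¹)ᴴ * (ketbra χ)ᵀ * L⁻¹) α Ψm hΨ
  -- P acts as identity on ketbra χ
  have hPH : Pᴴ = P := by
    rw [hP, Matrix.conjTranspose_sum]
    apply Finset.sum_congr rfl; intro a _
    ext i j
    simp [ketbra, Matrix.conjTranspose_apply, Matrix.vecMulVec_apply, mul_comm]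
  have hPk : P * ketbra χ = ketbra χ := by
    ext i j
    simp only [Matrix.mul_apply, ketbra, Matrix.vecMulVec_apply, Pi.star_apply]
    have h1 : ∑ k, P i k * χ k = χ i := by
      have := congrFun hPχ i
      simpa [Matrix.mulVec, dotProduct] using this
    calc ∑ k, P i k * (χ k * star (χ j))
        = (∑ k, P i k * χ k) * star (χ j) := by
          rw [Finset.sum_mul]; apply Finset.sum_congr rfl; intros; ring
      _ = χ i * star (χ j) := by rw [h1]
  have hkPm : ketbra χ * P = ketbra χ := by
    ext i j
    simp only [Matrix.mul_apply, ketbra, Matrix.vecMulVec_apply, Pi.star_apply]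
    have h2 : Pᴴ.mulVec χ = χ := by rw [hPH]; exact hPχ
    have h3 := congrFun h2 j
    simp only [Matrix.mulVec, dotProduct, Matrix.conjTranspose_apply] at h3
    have h4 := congrArg (starRingEnd ℂ) h3
    rw [map_sum] at h4
    simp only [RCLike.star_def, _root_.map_mul, Complex.conj_conj] at h4
    calc ∑ k, χ i * star (χ k) * P k j
        = χ i * ∑ k, (starRingEnd ℂ) (χ k) * P k j := by
          rw [Finset.mul_sum]; apply Finset.sum_congr rfl; intros
          simp only [RCLike.star_def]; ring
      _ = χ i * star (χ j) := by
          rw [show ∑ k, (starRingEnd ℂ) (χ k) * P k j = (starRingEnd ℂ) (χ j) from by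
            rw [← h4]; apply Finset.sum_congr rfl; intros; ring]
          simp [RCLike.star_def]
  have hA' : A = ((α:ℂ))^2 • ketbra χ := by
    rw [hA, hptA, hsand, Matrix.transpose_transpose, Matrix.mul_smul, Matrix.smul_mul,
      hPk, hkPm]
  have htrk : (ketbra χ).trace = 1 := by
    rw [Matrix.trace, ← hχ]
    simp only [Matrix.diag, ketbra, Matrix.vecMulVec_apply, Pi.star_apply, dotProduct,
      Pi.star_apply]
    apply Finset.sum_congr rfl; intros; ring
  have hAtr : A.trace = ((t⁻¹ : ℝ) : ℂ) := by
    rw [hA', Matrix.trace_smul, htrk, smul_eq_mul, mul_one, ← Complex.ofReal_pow, hα2]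
  constructor
  · rw [hAtr]
    simpa using inv_pos.mpr ht0
  · rw [hAtr, hA', ← Complex.ofReal_pow, hα2, smul_smul,
      inv_mul_cancel₀ (by exact_mod_cast ne_of_gt (inv_pos.mpr ht0)), one_smul]
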